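/- Let g(y) = 29y²(1 − y) + 33y(1 − y)⁴ for y ∈ [0,1]. Then ∫₀¹ g(s²) ds = 302/105 and ∫₀¹ g(1 − s²) ds = 302/105; in particular the two integrals are equal. -/
import Mathlib

private lemma intg_aux (c : ℝ) (n : ℕ) : (∫ s in (0:ℝ)..1, c * s ^ n) = c / (n+1) := by
  rw [intervalIntegral.integral_const_mul, integral_pow]
  simp
  ring

private lemma ii_aux (c : ℝ) (n : ℕ) :
    IntervalIntegrable (fun s : ℝ => c * s ^ n) MeasureTheory.volume 0 1 :=
  ((continuous_const.mul (continuous_pow n)).intervalIntegrable 0 1)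

/-- For `g(y) = 29y²(1 − y) + 33y(1 − y)⁴`, both `∫₀¹ g(s²) ds` and `∫₀¹ g(1 − s²) ds`
equal `302/105`; in particular the two integrals are equal, so the associated
asymmetrical solid of revolution has turn-up number `1`. -/
theorem asymmetric_clepsydra_g :
    (∫ s in (0:ℝ)..1,
      (29 * (s ^ 2) ^ 2 * (1 - s ^ 2) + 33 * s ^ 2 * (1 - s ^ 2) ^ 4)) = 302 / 105 ∧
    (∫ s in (0:ℝ)..1,
      (29 * (1 - s ^ 2) ^ 2 * (1 - (1 - s ^ 2)) +
        33 * (1 - s ^ 2) * (1 - (1 - s ^ 2)) ^ 4)) = 302 / 105 := by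
  constructor
  · have h : ∀ s : ℝ, 29 * (s ^ 2) ^ 2 * (1 - s ^ 2) + 33 * s ^ 2 * (1 - s ^ 2) ^ 4
        = 33 * s ^ 2 + (-103) * s ^ 4 + 169 * s ^ 6 + (-132) * s ^ 8 + 33 * s ^ 10 := by
      intro s; ring
    simp only [h]
    rw [intervalIntegral.integral_add
          ((((ii_aux 33 2).add (ii_aux (-103) 4)).add (ii_aux 169 6)).add (ii_aux (-132) 8))
          (ii_aux 33 10),
        intervalIntegral.integral_add
          (((ii_aux 33 2).add (ii_aux (-103) 4)).add (ii_aux 169 6)) (ii_aux (-132) 8),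
        intervalIntegral.integral_add ((ii_aux 33 2).add (ii_aux (-103) 4)) (ii_aux 169 6),
        intervalIntegral.integral_add (ii_aux 33 2) (ii_aux (-103) 4),
        intg_aux, intg_aux, intg_aux, intg_aux, intg_aux]
    norm_num
  · have h : ∀ s : ℝ, 29 * (1 - s ^ 2) ^ 2 * (1 - (1 - s ^ 2)) +
        33 * (1 - s ^ 2) * (1 - (1 - s ^ 2)) ^ 4
        = 29 * s ^ 2 + (-58) * s ^ 4 + 29 * s ^ 6 + 33 * s ^ 8 + (-33) * s ^ 10 := by
      intro s; ring
    simp only [h]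
    rw [intervalIntegral.integral_add
          ((((ii_aux 29 2).add (ii_aux (-58) 4)).add (ii_aux 29 6)).add (ii_aux 33 8))
          (ii_aux (-33) 10),
        intervalIntegral.integral_add
          (((ii_aux 29 2).add (ii_aux (-58) 4)).add (ii_aux 29 6)) (ii_aux 33 8),
        intervalIntegral.integral_add ((ii_aux 29 2).add (ii_aux (-58) 4)) (ii_aux 29 6),
        intervalIntegral.integral_add (ii_aux 29 2) (ii_aux (-58) 4),
        intg_aux, intg_aux, intg_aux, intg_aux, intg_aux]
    norm_num
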